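/- If κ := 1 + β - α < 0, with α, β > 0, then the series ∑_{r=0}^∞ Γ(αr + a)/Γ(βr + b) · z^r/r! diverges for every nonzero complex z. -/

import Mathlib

open Complex

open MeasureTheory Set Filter

set_option maxHeartbeats 2000000

lemma wd_norm_Gamma_le {s : ℂ} (hs : 0 < s.re) : ‖Complex.Gamma s‖ ≤ Real.Gamma s.re := by
  rw [Complex.Gamma_eq_integral hs, Real.Gamma_eq_integral hs, Complex.GammaIntegral]
  refine le_trans (norm_integral_le_integral_norm _) (le_of_eq ?_)
  refine setIntegral_congr_fun measurableSet_Ioi fun x hx => ?_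
  rw [norm_mul,
    Complex.norm_cpow_eq_rpow_re_of_pos hx, Complex.norm_real, Real.norm_eq_abs,
    _root_.abs_of_nonneg (Real.exp_pos _).le, Complex.sub_re, Complex.one_re]

lemma wd_lower (w : ℂ) (hw : 1 ≤ w.re) :
    ∀ n : ℕ, (Nat.factorial n : ℝ) * ‖Complex.Gamma w‖ ≤ ‖Complex.Gamma (w + n)‖ := by
  intro n
  induction n with
  | zero => simp
  | succ n ih =>
    have hre : (w + n).re = w.re + n := by simp
    have hwn : w + (n : ℂ) ≠ 0 := by
      intro h
      have := congrArg Complex.re h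
      rw [hre] at this
      simp at this
      have : (0:ℝ) ≤ (n:ℝ) := Nat.cast_nonneg n
      linarith
    have heq : (w + ((n+1 : ℕ) : ℂ)) = (w + n) + 1 := by push_cast; ring
    rw [heq, Complex.Gamma_add_one _ hwn, norm_mul]
    have h1 : (n:ℝ) + 1 ≤ ‖(w + n : ℂ)‖ := by
      have := Complex.re_le_norm (w + n)
      rw [hre] at this
      linarith
    have h2 : (0:ℝ) ≤ ‖Complex.Gamma (w + n)‖ := norm_nonneg _
    calc ((Nat.factorial (n+1)) : ℝ) * ‖Complex.Gamma w‖ = ((n:ℝ)+1) * ((Nat.factorial n : ℝ) * ‖Complex.Gamma w‖) := by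
          rw [Nat.factorial_succ]; push_cast; ring
      _ ≤ ((n:ℝ)+1) * ‖Complex.Gamma (w + n)‖ := by
          apply mul_le_mul_of_nonneg_left ih (by positivity)
      _ ≤ ‖(w + n : ℂ)‖ * ‖Complex.Gamma (w + n)‖ := mul_le_mul_of_nonneg_right h1 h2

lemma wd_upper (c : ℝ) (hc : 0 < c) (hc2 : c ≤ 2) :
    ∀ p : ℕ, Real.Gamma (c + p) ≤ Real.Gamma c * (Nat.factorial (p+1)) := by
  intro p
  induction p with
  | zero => simp
  | succ p ih =>
    have hcp : c + (p:ℝ) ≠ 0 := by positivity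
    have heq : c + ((p+1 : ℕ) : ℝ) = (c + p) + 1 := by push_cast; ring
    rw [heq, Real.Gamma_add_one hcp]
    have hnn : 0 ≤ Real.Gamma (c + p) := Real.Gamma_nonneg_of_nonneg (by positivity)
    calc (c + (p:ℝ)) * Real.Gamma (c + p) ≤ ((p:ℝ) + 2) * (Real.Gamma c * (Nat.factorial (p+1))) := by
          apply mul_le_mul (by linarith) ih hnn (by positivity)
      _ = Real.Gamma c * ((Nat.factorial (p+1+1)) : ℕ) := by
          rw [Nat.factorial_succ (p+1)]; push_cast; ring

lemma wd_fact (s : ℕ) : ∀ d : ℕ, Nat.factorial s * (s+1)^d ≤ Nat.factorial (s + d) := by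
  intro d
  induction d with
  | zero => simp
  | succ d ih =>
    calc Nat.factorial s * (s+1)^(d+1) = (s+1) * (Nat.factorial s * (s+1)^d) := by ring
      _ ≤ (s+1) * Nat.factorial (s+d) := Nat.mul_le_mul_left _ ih
      _ ≤ (s+d+1) * Nat.factorial (s+d) := Nat.mul_le_mul_right _ (by omega)
      _ = Nat.factorial (s + (d+1)) := by rw [← Nat.factorial_succ]; ring_nf

/-- If `κ = 1 + β - α < 0` with `α, β > 0`, the Wright series diverges for every
nonzero complex `z`. -/
theorem wright_divergent_of_kappa_neg (α β : ℝ) (a b : ℂ)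
    (hα : 0 < α) (hβ : 0 < β) (hκ : 1 + β - α < 0)
    (ha : ∀ r k : ℕ, (α * r : ℂ) + a ≠ -(k : ℂ)) :
    ∀ z : ℂ, z ≠ 0 →
      ¬ Summable (fun r : ℕ =>
        Complex.Gamma ((α * r : ℝ) + a) / Complex.Gamma ((β * r : ℝ) + b) *
          z ^ r / (Nat.factorial r)) := by
  intro z hz hsum
  set δ : ℝ := α - β - 1 with hδ_def
  have hδ : 0 < δ := by simp only [hδ_def]; linarith
  -- minimum of ‖Γ‖ on the strip segment
  have hgam_ne : ∀ c : ℝ, 1 ≤ c → ∀ k : ℕ, (c : ℂ) + a.im * Complex.I ≠ -(k : ℂ) := by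
    intro c hc k h
    have := congrArg Complex.re h
    simp at this
    have : (0:ℝ) ≤ (k:ℝ) := Nat.cast_nonneg k
    linarith
  have contg : ContinuousOn (fun c : ℝ => ‖Complex.Gamma ((c:ℂ) + a.im * Complex.I)‖)
      (Set.Icc 1 2) := by
    intro c hc
    apply ContinuousAt.continuousWithinAt
    have h1 : ContinuousAt (fun c : ℝ => (c:ℂ) + a.im * Complex.I) c := by fun_prop
    have h2 : ContinuousAt Complex.Gamma ((c:ℂ) + a.im * Complex.I) :=
      (Complex.differentiableAt_Gamma _ (hgam_ne c hc.1)).continuousAt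
    exact (ContinuousAt.comp (x := c) h2 h1).norm
  obtain ⟨c₀, hc₀, hmin'⟩ := isCompact_Icc.exists_isMinOn ⟨1, by norm_num⟩ contg
  have hmin := isMinOn_iff.mp hmin'
  set m : ℝ := ‖Complex.Gamma ((c₀:ℂ) + a.im * Complex.I)‖ with hm_def
  have hm : 0 < m := by
    rw [hm_def, norm_pos_iff]
    exact Complex.Gamma_ne_zero (hgam_ne c₀ hc₀.1)
  have contG : ContinuousOn Real.Gamma (Set.Icc 1 2) := by
    intro c hc
    apply ContinuousAt.continuousWithinAt
    refine (Real.differentiableAt_Gamma fun k => ?_).continuousAt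
    have : (0:ℝ) ≤ (k:ℝ) := Nat.cast_nonneg k
    have := hc.1; intro h; rw [h] at this; linarith
  obtain ⟨c₁, hc₁, hmax'⟩ := isCompact_Icc.exists_isMaxOn ⟨1, by norm_num⟩ contG
  have hmax := isMaxOn_iff.mp hmax'
  set M : ℝ := Real.Gamma c₁ with hM_def
  have hM : 0 < M := by
    have := hmax 1 (by norm_num)
    rw [Real.Gamma_one] at this
    linarith
  -- eventual facts
  have key : ∀ (C : ℝ) {e : ℝ}, 0 < e → ∀ᶠ r : ℕ in atTop, C ≤ e * r := by
    intro C e he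
    exact (tendsto_natCast_atTop_atTop.const_mul_atTop he).eventually_ge_atTop C
  have h1 : ∀ᶠ r : ℕ in atTop, 2 ≤ α * r + a.re := by
    filter_upwards [key (2 - a.re) hα] with r hr; linarith
  have h2 : ∀ᶠ r : ℕ in atTop, 2 ≤ β * r + b.re := by
    filter_upwards [key (2 - b.re) hβ] with r hr; linarith
  have h3 : ∀ᶠ r : ℕ in atTop, δ/2 * r ≤ δ * r + (a.re - b.re - 2) := by
    filter_upwards [key (2 - a.re + b.re) (half_pos hδ)] with r hr; linarith
  have h4 : ∀ᶠ r : ℕ in atTop, 1 ≤ (r:ℝ) ^ (δ/2) * ‖z‖ := by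
    have ht : Tendsto (fun r : ℕ => (r:ℝ) ^ (δ/2) * ‖z‖) atTop atTop := by
      exact ((tendsto_rpow_atTop (half_pos hδ)).comp
        tendsto_natCast_atTop_atTop).atTop_mul_const (norm_pos_iff.mpr hz)
    exact ht.eventually_ge_atTop 1
  have h5 : ∀ᶠ r : ℕ in atTop, 2 ≤ r := eventually_ge_atTop 2
  have h6 : ∀ᶠ r : ℕ in atTop,
      ‖Complex.Gamma ((α * r : ℝ) + a) / Complex.Gamma ((β * r : ℝ) + b) *
        z ^ r / (Nat.factorial r : ℂ)‖ < m / M := by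
    have := hsum.tendsto_atTop_zero.norm
    rw [norm_zero] at this
    exact this.eventually_lt_const (div_pos hm hM)
  obtain ⟨r, hlt, hx, hu, hdr, hz1, hr2⟩ :=
    (h6.and (h1.and (h2.and (h3.and (h4.and h5))))).exists
  -- notation
  set x : ℝ := α * r + a.re with hx_def
  set u : ℝ := β * r + b.re with hu_def
  set A : ℂ := ((α * r : ℝ) : ℂ) + a with hA_def
  set B : ℂ := ((β * r : ℝ) : ℂ) + b with hB_def
  have hAre : A.re = x := by simp [hA_def, hx_def]
  have hBre : B.re = u := by simp [hB_def, hu_def]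
  -- decomposition of A
  have hfx : (2:ℤ) ≤ ⌊x⌋ := by exact_mod_cast Int.le_floor.mpr (by exact_mod_cast hx)
  set n : ℕ := (⌊x⌋ - 1).toNat with hn_def
  have hn : (n:ℝ) = (⌊x⌋:ℝ) - 1 := by
    have h0 : (0:ℤ) ≤ ⌊x⌋ - 1 := by omega
    have h1 : ((n:ℕ):ℤ) = ⌊x⌋ - 1 := by rw [hn_def]; exact Int.toNat_of_nonneg h0
    have h2 := congrArg (fun t : ℤ => (t:ℝ)) h1
    push_cast at h2
    linarith [h2]
  clear_value n
  have hfl : (⌊x⌋:ℝ) ≤ x := Int.floor_le x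
  have hfl2 : x - 1 < (⌊x⌋:ℝ) := Int.sub_one_lt_floor x
  have hc_lo : 1 ≤ x - n := by rw [hn]; linarith
  have hc_hi : x - n ≤ 2 := by rw [hn]; linarith
  set w : ℂ := A - (n:ℂ) with hw_def
  have hwre : w.re = x - n := by simp [hw_def, hAre]
  have hwim : w.im = a.im := by simp [hw_def, hA_def]
  have hweq : w = ((w.re : ℝ) : ℂ) + (a.im : ℂ) * Complex.I := by
    rw [← Complex.mk_eq_add_mul_I, ← hwim]
  have hmw : m ≤ ‖Complex.Gamma w‖ := by
    rw [hweq]; exact hmin w.re (by rw [hwre]; exact ⟨hc_lo, hc_hi⟩)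
  have hlowA : m * (Nat.factorial n : ℝ) ≤ ‖Complex.Gamma A‖ := by
    have := wd_lower w (by rw [hwre]; exact hc_lo) n
    have hAw : A = w + (n:ℂ) := by rw [hw_def]; ring
    rw [hAw]
    calc m * (Nat.factorial n : ℝ) ≤ ‖Complex.Gamma w‖ * (Nat.factorial n : ℝ) := by
          apply mul_le_mul_of_nonneg_right hmw (by positivity)
      _ = (Nat.factorial n : ℝ) * ‖Complex.Gamma w‖ := by ring
      _ ≤ ‖Complex.Gamma (w + n)‖ := this
  -- decomposition of B
  have hfu : (2:ℤ) ≤ ⌊u⌋ := by exact_mod_cast Int.le_floor.mpr (by exact_mod_cast hu)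
  set p : ℕ := (⌊u⌋ - 1).toNat with hp_def
  have hp : (p:ℝ) = (⌊u⌋:ℝ) - 1 := by
    have h0 : (0:ℤ) ≤ ⌊u⌋ - 1 := by omega
    have h1 : ((p:ℕ):ℤ) = ⌊u⌋ - 1 := by rw [hp_def]; exact Int.toNat_of_nonneg h0
    have h2 := congrArg (fun t : ℤ => (t:ℝ)) h1
    push_cast at h2
    linarith [h2]
  clear_value p
  have hful : (⌊u⌋:ℝ) ≤ u := Int.floor_le u
  have hful2 : u - 1 < (⌊u⌋:ℝ) := Int.sub_one_lt_floor u
  have hcu_lo : 1 ≤ u - p := by rw [hp]; linarith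
  have hcu_hi : u - p ≤ 2 := by rw [hp]; linarith
  have hupB : ‖Complex.Gamma B‖ ≤ M * (Nat.factorial (p+1) : ℝ) := by
    have h0 : 0 < B.re := by rw [hBre]; linarith
    refine le_trans (wd_norm_Gamma_le h0) ?_
    rw [hBre]
    have : u = (u - p) + p := by ring
    rw [this]
    calc Real.Gamma ((u - p) + p) ≤ Real.Gamma (u - p) * (Nat.factorial (p+1) : ℝ) :=
          wd_upper (u - p) (by linarith) hcu_hi p
      _ ≤ M * (Nat.factorial (p+1) : ℝ) := by
          apply mul_le_mul_of_nonneg_right (hmax (u - p) ⟨hcu_lo, hcu_hi⟩) (by positivity)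
  -- the gap d
  have hdr' : (α - β - 1) / 2 * (r:ℝ) ≤ (α - β - 1) * (r:ℝ) + (a.re - b.re - 2) := by
    simpa only [hδ_def] using hdr
  have hdr0 : (0:ℝ) ≤ (α - β - 1) / 2 * (r:ℝ) := by
    have : (0:ℝ) ≤ (r:ℝ) := Nat.cast_nonneg r
    have h1 : (0:ℝ) < α - β - 1 := by linarith
    positivity
  have hnpr : p + 1 + r ≤ n := by
    have hreal : ((p:ℝ) + 1 + r) ≤ (n:ℝ) := by
      rw [hn, hp]
      linarith [hfl2, hful, hdr', hdr0, hx_def, hu_def]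
    exact_mod_cast hreal
  set d : ℕ := n - (p + 1 + r) with hd_def
  have hnd : n = (p + 1 + r) + d := by omega
  clear_value d
  have hdR : δ/2 * r ≤ (d:ℝ) := by
    have hcast : (d:ℝ) = (n:ℝ) - ((p:ℝ) + 1 + r) := by
      rw [hd_def, Nat.cast_sub hnpr]; push_cast; ring
    simp only [hδ_def]
    rw [hcast, hn, hp]
    linarith [hfl2, hful, hdr', hx_def, hu_def]
  -- factorial bound: n! ≥ (p+1)! * r! * r^d
  have hfact : (Nat.factorial (p+1)) * (Nat.factorial r) * r^d ≤ Nat.factorial n := by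
    rw [hnd]
    calc Nat.factorial (p+1) * Nat.factorial r * r^d
        ≤ Nat.factorial (p+1+r) * (p+1+r+1)^d := by
          apply Nat.mul_le_mul
          · exact Nat.le_of_dvd (Nat.factorial_pos _)
              (Nat.factorial_mul_factorial_dvd_factorial_add (p+1) r)
          · exact Nat.pow_le_pow_left (by omega) d
      _ ≤ Nat.factorial ((p+1+r) + d) := wd_fact (p+1+r) d
  -- r^d * ‖z‖^r ≥ 1
  have hrd1 : 1 ≤ ((r:ℝ))^d * ‖z‖^r := by
    have hr1 : (1:ℝ) ≤ (r:ℝ) := by exact_mod_cast Nat.one_le_iff_ne_zero.mpr (by omega)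
    have e1 : ((r:ℝ))^((δ/2) * r) ≤ ((r:ℝ))^d := by
      rw [← Real.rpow_natCast (r:ℝ) d]
      exact Real.rpow_le_rpow_of_exponent_le hr1 hdR
    have e2 : ((r:ℝ) ^ (δ/2) * ‖z‖)^r ≤ ((r:ℝ))^d * ‖z‖^r := by
      rw [mul_pow]
      apply mul_le_mul_of_nonneg_right _ (by positivity)
      calc ((r:ℝ) ^ (δ/2))^r = ((r:ℝ))^((δ/2) * r) := by
            rw [← Real.rpow_natCast ((r:ℝ)^(δ/2)) r, ← Real.rpow_mul (by positivity)]
        _ ≤ ((r:ℝ))^d := e1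
    calc (1:ℝ) = 1^r := (one_pow r).symm
      _ ≤ ((r:ℝ) ^ (δ/2) * ‖z‖)^r := pow_le_pow_left₀ (by norm_num) hz1 r
      _ ≤ ((r:ℝ))^d * ‖z‖^r := e2
  -- assemble
  have hB0 : Complex.Gamma B ≠ 0 := by
    apply Complex.Gamma_ne_zero
    intro k h
    have := congrArg Complex.re h
    rw [hBre] at this
    simp at this
    have : (0:ℝ) ≤ (k:ℝ) := Nat.cast_nonneg k
    linarith
  have hHpos : 0 < ‖Complex.Gamma B‖ := norm_pos_iff.mpr hB0
  have hnorm : ‖Complex.Gamma A / Complex.Gamma B * z ^ r / (Nat.factorial r : ℂ)‖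
      = ‖Complex.Gamma A‖ * ‖z‖^r / (‖Complex.Gamma B‖ * (Nat.factorial r : ℝ)) := by
    rw [norm_div, norm_mul, norm_div, norm_pow]
    rw [Complex.norm_natCast]
    ring
  have hfinal : m / M ≤ ‖Complex.Gamma A / Complex.Gamma B * z ^ r / (Nat.factorial r : ℂ)‖ := by
    rw [hnorm]
    rw [div_le_div_iff₀ hM (by positivity)]
    set G := ‖Complex.Gamma A‖
    set H := ‖Complex.Gamma B‖
    set F := (Nat.factorial r : ℝ)
    set P := (Nat.factorial (p+1) : ℝ)
    set Z := ‖z‖^r with hZ_def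
    have hZ0 : 0 ≤ Z := by positivity
    have hG : m * (P * F * ((r:ℝ))^d) ≤ G := by
      refine le_trans ?_ hlowA
      apply mul_le_mul_of_nonneg_left _ hm.le
      have := hfact
      calc P * F * ((r:ℝ))^d = ((Nat.factorial (p+1) * Nat.factorial r * r^d : ℕ) : ℝ) := by
            push_cast; ring
        _ ≤ ((Nat.factorial n : ℕ) : ℝ) := Nat.cast_le.mpr this
    calc m * (H * F) ≤ m * (M * P * F) := by
          apply mul_le_mul_of_nonneg_left _ hm.le
          have : 0 ≤ F := by positivity
          nlinarith [hupB]
      _ ≤ m * (M * P * F) * (((r:ℝ))^d * Z) := le_mul_of_one_le_right (by positivity) hrd1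
      _ = (m * (P * F * ((r:ℝ))^d)) * Z * M := by ring
      _ ≤ G * Z * M := by
          apply mul_le_mul_of_nonneg_right _ hM.le
          exact mul_le_mul_of_nonneg_right hG hZ0
  exact absurd hfinal (not_le.mpr hlt)
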